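/- arXiv:hep-th/0304136 — 2 statements merged into one kernel-verified Lean document; each statement's English description precedes it below -/
import Mathlib

section
/- For every k ∈ {1,2,3}, t ∈ ℝ, and Θ, the vector ṽ_k(Θ,t) is an eigenvector of the momentum operator p̂_k(t) with eigenvalue (−1)^{θ_k} √(p − q(Θ) + θ_k): p̂_k(t) ṽ_k(Θ,t) = (−1)^{θ_k} √(p − q(Θ) + θ_k) · ṽ_k(Θ,t). -/
open scoped BigOperators
open Finset

/-- Index set: triples Θ = (θ₁,θ₂,θ₃) with θᵢ ∈ {0,1}. -/
abbrev WIdx := Fin 3 → Fin 2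

/-- The 8-dimensional state space V = EuclideanSpace ℂ ({0,1}³). -/
abbrev WV := EuclideanSpace ℂ WIdx

/-- Orthonormal basis vector e_Θ. -/
noncomputable def eV (Θ : WIdx) : WV := EuclideanSpace.single Θ 1

/-- The basis (e_Θ)_Θ of V, as a `Basis`. -/
noncomputable def bV : Module.Basis WIdx ℂ WV := (EuclideanSpace.basisFun WIdx ℂ).toBasis

/-- q(Θ) = θ₁ + θ₂ + θ₃. -/
def qv (Θ : WIdx) : ℕ := ∑ j, (Θ j : ℕ)

/-- Sign factor (−1)^(θ₁ + ⋯ + θ_{i−1}). -/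
def sgnBelow (i : Fin 3) (Θ : WIdx) : ℂ :=
  (-1 : ℂ) ^ (∑ j : Fin 3, if (j : ℕ) < (i : ℕ) then (Θ j : ℕ) else 0)

/-- Sign factor (−1)^(θ₁ + ⋯ + θ_i). -/
def sgnUpTo (i : Fin 3) (Θ : WIdx) : ℂ :=
  (-1 : ℂ) ^ (∑ j : Fin 3, if (j : ℕ) ≤ (i : ℕ) then (Θ j : ℕ) else 0)

/-- A_i⁻ e_Θ = θ_i (−1)^(θ₁+⋯+θ_{i−1}) √(p−q(Θ)+1) e_{Θ[θ_i↦0]}. -/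
noncomputable def Aminus (p : ℕ) (i : Fin 3) : WV →ₗ[ℂ] WV :=
  bV.constr ℂ fun Θ =>
    (((Θ i : ℕ) : ℂ) * sgnBelow i Θ *
      ((Real.sqrt ((p : ℝ) - (qv Θ : ℝ) + 1) : ℝ) : ℂ)) • eV (Function.update Θ i 0)

/-- A_i⁺ e_Θ = (1−θ_i) (−1)^(θ₁+⋯+θ_{i−1}) √(p−q(Θ)) e_{Θ[θ_i↦1]}. -/
noncomputable def Aplus (p : ℕ) (i : Fin 3) : WV →ₗ[ℂ] WV :=
  bV.constr ℂ fun Θ =>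
    (((1 : ℂ) - ((Θ i : ℕ) : ℂ)) * sgnBelow i Θ *
      ((Real.sqrt ((p : ℝ) - (qv Θ : ℝ)) : ℝ) : ℂ)) • eV (Function.update Θ i 1)

/-- Anticommutator {X,Y} = XY + YX. -/
noncomputable def acommOp (X Y : WV →ₗ[ℂ] WV) : WV →ₗ[ℂ] WV := X ∘ₗ Y + Y ∘ₗ X

/-- Commutator [X,Y] = XY − YX. -/
noncomputable def commOp (X Y : WV →ₗ[ℂ] WV) : WV →ₗ[ℂ] WV := X ∘ₗ Y - Y ∘ₗ X

/-- Dimensionless Hamiltonian ĥ = Σᵢ {A_i⁺, A_i⁻}. -/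
noncomputable def hOp (p : ℕ) : WV →ₗ[ℂ] WV := ∑ i, acommOp (Aplus p i) (Aminus p i)

/-- Position operator r̂_k(t) = e^{−it} A_k⁺ + e^{it} A_k⁻. -/
noncomputable def rOp (p : ℕ) (k : Fin 3) (t : ℝ) : WV →ₗ[ℂ] WV :=
  Complex.exp (-(t : ℂ) * Complex.I) • Aplus p k +
    Complex.exp ((t : ℂ) * Complex.I) • Aminus p k

/-- Momentum operator p̂_k(t) = −i (e^{−it} A_k⁺ − e^{it} A_k⁻). -/
noncomputable def pOp (p : ℕ) (k : Fin 3) (t : ℝ) : WV →ₗ[ℂ] WV :=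
  (-Complex.I) • (Complex.exp (-(t : ℂ) * Complex.I) • Aplus p k -
    Complex.exp ((t : ℂ) * Complex.I) • Aminus p k)

/-- Levi-Civita symbol ε_{jkl} with ε_{123} = 1 (indices 0,1,2 here). -/
def eps (j k l : Fin 3) : ℂ :=
  if (j, k, l) = (0, 1, 2) ∨ (j, k, l) = (1, 2, 0) ∨ (j, k, l) = (2, 0, 1) then 1
  else if (j, k, l) = (2, 1, 0) ∨ (j, k, l) = (1, 0, 2) ∨ (j, k, l) = (0, 2, 1) then -1
  else 0

/-- Angular momentum M_j = −i Σ_{k,l} ε_{jkl} {A_k⁺, A_l⁻}. -/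
noncomputable def Mop (p : ℕ) (j : Fin 3) : WV →ₗ[ℂ] WV :=
  (-Complex.I) • ∑ k, ∑ l, eps j k l • acommOp (Aplus p k) (Aminus p l)

/-- Eigenvectors v_k(Θ,t) of the position operator r̂_k(t). -/
noncomputable def vVec (k : Fin 3) (t : ℝ) (Θ : WIdx) : WV :=
  (((Real.sqrt 2)⁻¹ : ℝ) : ℂ) •
    (eV (Function.update Θ k 0) +
      (sgnUpTo k Θ * Complex.exp (-(t : ℂ) * Complex.I)) • eV (Function.update Θ k 1))

/-- Eigenvectors ṽ_k(Θ,t) of the momentum operator p̂_k(t). -/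
noncomputable def vTilde (k : Fin 3) (t : ℝ) (Θ : WIdx) : WV :=
  (((Real.sqrt 2)⁻¹ : ℝ) : ℂ) •
    (eV (Function.update Θ k 0) -
      (Complex.I * sgnUpTo k Θ * Complex.exp (-(t : ℂ) * Complex.I)) • eV (Function.update Θ k 1))

/-- The non-stationary state z = (1/√2)(e_{(0,0,0)} + e_{(0,0,1)}). -/
noncomputable def zState : WV :=
  (((Real.sqrt 2)⁻¹ : ℝ) : ℂ) • (eV ![0, 0, 0] + eV ![0, 0, 1])

/-- The state x₁ = (1/√2)(e_{(0,1,0)} + e_{(1,1,0)}). -/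
noncomputable def x1State : WV :=
  (((Real.sqrt 2)⁻¹ : ℝ) : ℂ) • (eV ![0, 1, 0] + eV ![1, 1, 0])

local notation "⟪" x ", " y "⟫" => @inner ℂ _ _ x y

lemma eV_eq_bV (Θ : WIdx) : eV Θ = bV Θ := by simp [bV, eV]

lemma Aplus_eV (p : ℕ) (i : Fin 3) (Θ : WIdx) :
    Aplus p i (eV Θ) = (((1 : ℂ) - ((Θ i : ℕ) : ℂ)) * sgnBelow i Θ *
      ((Real.sqrt ((p : ℝ) - (qv Θ : ℝ)) : ℝ) : ℂ)) • eV (Function.update Θ i 1) := by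
  rw [eV_eq_bV, Aplus, Module.Basis.constr_basis]

lemma Aminus_eV (p : ℕ) (i : Fin 3) (Θ : WIdx) :
    Aminus p i (eV Θ) = (((Θ i : ℕ) : ℂ) * sgnBelow i Θ *
      ((Real.sqrt ((p : ℝ) - (qv Θ : ℝ) + 1) : ℝ) : ℂ)) • eV (Function.update Θ i 0) := by
  rw [eV_eq_bV, Aminus, Module.Basis.constr_basis]

lemma qv_update (Θ : WIdx) (k : Fin 3) (c : Fin 2) :
    (qv (Function.update Θ k c) : ℝ) = (qv Θ : ℝ) - ((Θ k : ℕ) : ℝ) + ((c : ℕ) : ℝ) := by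
  have h1 : qv (Function.update Θ k c) = (c : ℕ) + ∑ j ∈ univ.erase k, (Θ j : ℕ) := by
    rw [qv, ← Finset.add_sum_erase univ _ (mem_univ k), Function.update_self]
    congr 1
    exact Finset.sum_congr rfl fun j hj => by
      rw [Function.update_of_ne (Finset.mem_erase.mp hj).1]
  have h2 : qv Θ = (Θ k : ℕ) + ∑ j ∈ univ.erase k, (Θ j : ℕ) :=
    (Finset.add_sum_erase univ _ (mem_univ k)).symm
  rw [h1, h2]; push_cast; ring

lemma sgnBelow_update (Θ : WIdx) (k : Fin 3) (c : Fin 2) :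
    sgnBelow k (Function.update Θ k c) = sgnBelow k Θ := by
  unfold sgnBelow
  congr 1
  refine Finset.sum_congr rfl fun j _ => ?_
  by_cases h : (j : ℕ) < (k : ℕ)
  · have : j ≠ k := fun e => by simp [e] at h
    simp [h, Function.update_of_ne this]
  · simp [h]

lemma sgnUpTo_eq (Θ : WIdx) (k : Fin 3) :
    sgnUpTo k Θ = sgnBelow k Θ * (-1 : ℂ) ^ (Θ k : ℕ) := by
  unfold sgnUpTo sgnBelow
  rw [← pow_add]
  congr 1
  have : ∀ j : Fin 3, (if (j : ℕ) ≤ (k : ℕ) then (Θ j : ℕ) else 0) =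
      (if (j : ℕ) < (k : ℕ) then (Θ j : ℕ) else 0) + (if j = k then (Θ j : ℕ) else 0) := by
    intro j
    rcases lt_trichotomy (j : ℕ) (k : ℕ) with h | h | h
    · have hne : j ≠ k := fun e => by subst e; exact lt_irrefl _ h
      simp [h, h.le, hne]
    · have : j = k := Fin.ext h
      simp [this]
    · have hne : j ≠ k := fun e => by subst e; exact lt_irrefl _ h
      simp [h.not_gt, h.not_ge, hne]
  rw [Finset.sum_congr rfl fun j _ => this j, Finset.sum_add_distrib,
    Finset.sum_ite_eq' univ k fun j => (Θ j : ℕ)]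
  simp

/-- p̂_k(t) ṽ_k(Θ,t) = (−1)^{θ_k} √(p − q(Θ) + θ_k) ṽ_k(Θ,t). -/
theorem stmt14 (p : ℕ) (hp : 3 ≤ p) (k : Fin 3) (t : ℝ) (Θ : WIdx) :
    pOp p k t (vTilde k t Θ) =
      (((-1 : ℂ) ^ (Θ k : ℕ)) *
        ((Real.sqrt ((p : ℝ) - (qv Θ : ℝ) + (Θ k : ℕ)) : ℝ) : ℂ)) • vTilde k t Θ := by
  set lam : ℂ := ((Real.sqrt ((p : ℝ) - (qv Θ : ℝ) + (Θ k : ℕ)) : ℝ) : ℂ) with hlam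
  set s0 : ℂ := sgnBelow k Θ with hs0def
  have harg0 : (p : ℝ) - (qv (Function.update Θ k 0) : ℝ) = (p:ℝ) - (qv Θ:ℝ) + ((Θ k : ℕ):ℝ) := by
    rw [qv_update]; push_cast [Fin.val_zero, Fin.val_one]; ring
  have harg1 : (p : ℝ) - (qv (Function.update Θ k 1) : ℝ) + 1 = (p:ℝ) - (qv Θ:ℝ) + ((Θ k : ℕ):ℝ) := by
    rw [qv_update]; push_cast [Fin.val_zero, Fin.val_one]; ring
  have hA1 : Aplus p k (eV (Function.update Θ k 0)) = (s0 * lam) • eV (Function.update Θ k 1) := by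
    rw [Aplus_eV, Function.update_idem, Function.update_self, sgnBelow_update, harg0]
    norm_num; rfl
  have hA2 : Aplus p k (eV (Function.update Θ k 1)) = 0 := by
    rw [Aplus_eV, Function.update_self]
    norm_num
  have hA3 : Aminus p k (eV (Function.update Θ k 0)) = 0 := by
    rw [Aminus_eV, Function.update_self]
    norm_num
  have hA4 : Aminus p k (eV (Function.update Θ k 1)) = (s0 * lam) • eV (Function.update Θ k 0) := by
    rw [Aminus_eV, Function.update_idem, Function.update_self, sgnBelow_update, harg1]
    norm_num; rfl
  have hE : Complex.exp ((t : ℂ) * Complex.I) * Complex.exp (-(t : ℂ) * Complex.I) = 1 := by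
    rw [← Complex.exp_add]; ring_nf; exact Complex.exp_zero
  have hs0 : s0 * s0 = 1 := by
    rw [hs0def, sgnBelow, ← pow_add, ← two_mul, pow_mul]; norm_num
  have hpw : ((-1 : ℂ) ^ (Θ k : ℕ)) * ((-1 : ℂ) ^ (Θ k : ℕ)) = 1 := by
    rw [← pow_add, ← two_mul, pow_mul]; norm_num
  rw [pOp, vTilde, sgnUpTo_eq]
  simp only [LinearMap.smul_apply, LinearMap.sub_apply, map_smul, map_sub, hA1, hA2, hA3, hA4,
    smul_zero, zero_sub, sub_zero, smul_neg, smul_smul, smul_sub, neg_smul, ← hs0def]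
  match_scalars
  · push_cast
    linear_combination ((((Real.sqrt 2:ℝ):ℂ))⁻¹ * Complex.I * Complex.exp (-(t:ℂ)*Complex.I) * s0 * lam) * hpw
  · push_cast
    linear_combination ((((Real.sqrt 2:ℝ):ℂ))⁻¹ * ((-1:ℂ)^(Θ k:ℕ)) * lam * s0 * s0) * hE + ((((Real.sqrt 2:ℝ):ℂ))⁻¹ * ((-1:ℂ)^(Θ k:ℕ)) * lam) * hs0 + (-(((Real.sqrt 2:ℝ):ℂ))⁻¹ * s0 * s0 * Complex.exp (-(t:ℂ)*Complex.I) * Complex.exp ((t:ℂ)*Complex.I) * lam * ((-1:ℂ)^(Θ k:ℕ))) * Complex.I_mul_I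
end

section
/- For the non-stationary state z = (1/√2)(e_{(0,0,0)} + e_{(0,0,1)}) the mean trajectories are: ⟨z, r̂_1(t) z⟩ = ⟨z, r̂_2(t) z⟩ = 0, ⟨z, r̂_3(t) z⟩ = √p · cos t, ⟨z, p̂_1(t) z⟩ = ⟨z, p̂_2(t) z⟩ = 0, and ⟨z, p̂_3(t) z⟩ = −√p · sin t, for all t ∈ ℝ. -/
open scoped BigOperators
open Finset

local notation "⟪" x ", " y "⟫" => @inner ℂ _ _ x y

lemma bV_eq (Θ : WIdx) : bV Θ = eV Θ := by
  simp [bV, eV, OrthonormalBasis.coe_toBasis]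

lemma inner_eV (a b : WIdx) : (inner ℂ (eV a) (eV b) : ℂ) = if a = b then 1 else 0 := by
  simp only [eV, EuclideanSpace.inner_single_left, EuclideanSpace.single_apply, map_one, one_mul]

lemma sqrt_pm1 (p : ℕ) : Real.sqrt ((p:ℝ) - (1:ℕ) + 1) = Real.sqrt p := by norm_num

lemma Ap00 (p : ℕ) : Aplus p 0 (eV ![0,0,0]) = ((Real.sqrt p : ℝ) : ℂ) • eV ![1,0,0] := by
  rw [Aplus_eV]
  have h : Function.update (![0,0,0] : WIdx) 0 1 = ![1,0,0] := by decide
  simp [h, sgnBelow, qv, Fin.sum_univ_three]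

lemma Ap10 (p : ℕ) : Aplus p 1 (eV ![0,0,0]) = ((Real.sqrt p : ℝ) : ℂ) • eV ![0,1,0] := by
  rw [Aplus_eV]
  have h : Function.update (![0,0,0] : WIdx) 1 1 = ![0,1,0] := by decide
  simp [h, sgnBelow, qv, Fin.sum_univ_three]

lemma Ap20 (p : ℕ) : Aplus p 2 (eV ![0,0,0]) = ((Real.sqrt p : ℝ) : ℂ) • eV ![0,0,1] := by
  rw [Aplus_eV]
  have h : Function.update (![0,0,0] : WIdx) 2 1 = ![0,0,1] := by decide
  simp [h, sgnBelow, qv, Fin.sum_univ_three]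

lemma Ap01 (p : ℕ) :
    Aplus p 0 (eV ![0,0,1]) = ((Real.sqrt ((p:ℝ)-1) : ℝ) : ℂ) • eV ![1,0,1] := by
  rw [Aplus_eV]
  have h : Function.update (![0,0,1] : WIdx) 0 1 = ![1,0,1] := by decide
  simp [h, sgnBelow, qv, Fin.sum_univ_three]

lemma Ap11 (p : ℕ) :
    Aplus p 1 (eV ![0,0,1]) = ((Real.sqrt ((p:ℝ)-1) : ℝ) : ℂ) • eV ![0,1,1] := by
  rw [Aplus_eV]
  have h : Function.update (![0,0,1] : WIdx) 1 1 = ![0,1,1] := by decide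
  simp [h, sgnBelow, qv, Fin.sum_univ_three]

lemma Ap21 (p : ℕ) : Aplus p 2 (eV ![0,0,1]) = 0 := by
  rw [Aplus_eV]; simp

lemma Am00 (p : ℕ) (i : Fin 3) : Aminus p i (eV ![0,0,0]) = 0 := by
  rw [Aminus_eV]
  fin_cases i <;> simp

lemma Am01 (p : ℕ) : Aminus p 0 (eV ![0,0,1]) = 0 := by rw [Aminus_eV]; simp
lemma Am11 (p : ℕ) : Aminus p 1 (eV ![0,0,1]) = 0 := by rw [Aminus_eV]; simp

lemma Am21 (p : ℕ) : Aminus p 2 (eV ![0,0,1]) = ((Real.sqrt p : ℝ) : ℂ) • eV ![0,0,0] := by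
  rw [Aminus_eV]
  have h : Function.update (![0,0,1] : WIdx) 2 0 = ![0,0,0] := by decide
  have hq : qv (![0,0,1] : WIdx) = 1 := by decide
  simp [h, hq, sgnBelow, Fin.sum_univ_three, sqrt_pm1]
lemma sqrt2_sq : ((Real.sqrt 2 : ℝ) : ℂ) * ((Real.sqrt 2 : ℝ) : ℂ) = 2 := by
  norm_cast
  rw [Real.mul_self_sqrt (by norm_num)]

lemma sqrt2_ne : ((Real.sqrt 2 : ℝ) : ℂ) ≠ 0 := by
  simp [Real.sqrt_eq_zero']

/-- mean trajectories in the non-stationary state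
z = (1/√2)(e_{(0,0,0)} + e_{(0,0,1)}). -/
theorem stmt17 (p : ℕ) (hp : 3 ≤ p) (t : ℝ) :
    (⟪zState, rOp p 0 t zState⟫ : ℂ) = 0 ∧
    (⟪zState, rOp p 1 t zState⟫ : ℂ) = 0 ∧
    (⟪zState, rOp p 2 t zState⟫ : ℂ) = ((Real.sqrt p * Real.cos t : ℝ) : ℂ) ∧
    (⟪zState, pOp p 0 t zState⟫ : ℂ) = 0 ∧
    (⟪zState, pOp p 1 t zState⟫ : ℂ) = 0 ∧
    (⟪zState, pOp p 2 t zState⟫ : ℂ) = -((Real.sqrt p * Real.sin t : ℝ) : ℂ) := by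
  have hd : ∀ a b : WIdx, a ≠ b → (inner ℂ (eV a) (eV b) : ℂ) = 0 := by
    intro a b h; rw [inner_eV, if_neg h]
  have hs : ∀ a : WIdx, (inner ℂ (eV a) (eV a) : ℂ) = 1 := by
    intro a; rw [inner_eV, if_pos rfl]
  refine ⟨?_, ?_, ?_, ?_, ?_, ?_⟩
  · simp only [rOp, zState, LinearMap.add_apply, LinearMap.smul_apply, map_add, map_smul,
      Ap00, Ap01, Am00, Am01, smul_zero, add_zero, zero_add, inner_add_left, inner_add_right,
      inner_smul_left, inner_smul_right, smul_eq_mul,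
      hd _ _ (by decide : (![0,0,0]:WIdx) ≠ ![1,0,0]),
      hd _ _ (by decide : (![0,0,0]:WIdx) ≠ ![1,0,1]),
      hd _ _ (by decide : (![0,0,1]:WIdx) ≠ ![1,0,0]),
      hd _ _ (by decide : (![0,0,1]:WIdx) ≠ ![1,0,1])]
    ring
  · simp only [rOp, zState, LinearMap.add_apply, LinearMap.smul_apply, map_add, map_smul,
      Ap10, Ap11, Am00, Am11, smul_zero, add_zero, zero_add, inner_add_left, inner_add_right,
      inner_smul_left, inner_smul_right, smul_eq_mul,
      hd _ _ (by decide : (![0,0,0]:WIdx) ≠ ![0,1,0]),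
      hd _ _ (by decide : (![0,0,0]:WIdx) ≠ ![0,1,1]),
      hd _ _ (by decide : (![0,0,1]:WIdx) ≠ ![0,1,0]),
      hd _ _ (by decide : (![0,0,1]:WIdx) ≠ ![0,1,1])]
    ring
  · simp only [rOp, zState, LinearMap.add_apply, LinearMap.smul_apply, map_add, map_smul,
      Ap20, Ap21, Am00, Am21, smul_zero, add_zero, zero_add, inner_add_left, inner_add_right,
      inner_smul_left, inner_smul_right, inner_eV, Complex.conj_ofReal, smul_eq_mul]
    norm_num [show (![0,0,0]:WIdx) ≠ ![0,0,1] from by decide,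
      show (![0,0,1]:WIdx) ≠ ![0,0,0] from by decide]
    rw [Complex.cos]
    field_simp [sqrt2_ne]
    linear_combination (-1 : ℂ) * (Complex.exp (↑t*Complex.I) + Complex.exp (-(↑t*Complex.I))) *
      (↑(Real.sqrt (p:ℝ)) : ℂ) * sqrt2_sq
  · simp only [pOp, zState, LinearMap.smul_apply, LinearMap.sub_apply, map_add, map_smul,
      map_sub, Ap00, Ap01, Am00, Am01, smul_zero, add_zero, zero_add, sub_zero, zero_sub,
      inner_add_left, inner_add_right, inner_smul_left, inner_smul_right, inner_neg_right,
      smul_eq_mul,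
      hd _ _ (by decide : (![0,0,0]:WIdx) ≠ ![1,0,0]),
      hd _ _ (by decide : (![0,0,0]:WIdx) ≠ ![1,0,1]),
      hd _ _ (by decide : (![0,0,1]:WIdx) ≠ ![1,0,0]),
      hd _ _ (by decide : (![0,0,1]:WIdx) ≠ ![1,0,1])]
    ring
  · simp only [pOp, zState, LinearMap.smul_apply, LinearMap.sub_apply, map_add, map_smul,
      map_sub, Ap10, Ap11, Am00, Am11, smul_zero, add_zero, zero_add, sub_zero, zero_sub,
      inner_add_left, inner_add_right, inner_smul_left, inner_smul_right, inner_neg_right,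
      smul_eq_mul,
      hd _ _ (by decide : (![0,0,0]:WIdx) ≠ ![0,1,0]),
      hd _ _ (by decide : (![0,0,0]:WIdx) ≠ ![0,1,1]),
      hd _ _ (by decide : (![0,0,1]:WIdx) ≠ ![0,1,0]),
      hd _ _ (by decide : (![0,0,1]:WIdx) ≠ ![0,1,1])]
    ring
  · simp only [pOp, zState, LinearMap.smul_apply, LinearMap.sub_apply, map_add, map_smul,
      map_sub, Ap20, Ap21, Am00, Am21, smul_zero, add_zero, zero_add, sub_zero, zero_sub,
      inner_add_left, inner_add_right, inner_smul_left, inner_smul_right, inner_neg_right,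
      inner_eV, Complex.conj_ofReal, smul_eq_mul]
    norm_num [show (![0,0,0]:WIdx) ≠ ![0,0,1] from by decide,
      show (![0,0,1]:WIdx) ≠ ![0,0,0] from by decide]
    rw [Complex.sin]
    field_simp [sqrt2_ne]
    linear_combination (↑(Real.sqrt (p:ℝ)):ℂ) * (Complex.exp (-(Complex.I*↑t)) - Complex.exp (Complex.I*↑t)) * sqrt2_sq
end
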